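/- Let η : (a,b) → (ã,b̃) be a locally absolutely continuous increasing bijection and Γ : (a,b) → ℝ^{2×2} locally absolutely continuous with det Γ(x) = 1 for all x. Define R̃, Q̃ on (ã,b̃) by η'·(R̃∘η) = Γ* R Γ and η'·(Q̃∘η) = Γ* Q Γ + Γ* J Γ'. Then for any locally absolutely continuous f̃ : (ã,b̃) → ℂ² satisfying J f̃' + Q̃ f̃ = R̃ g̃ a.e. on (ã,b̃), the function f(x) = Γ(x) f̃(η(x)) satisfies J f' + Q f = R g a.e. on (a,b), where g(x) = Γ(x) g̃(η(x)). -/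

import Mathlib

open MeasureTheory Set Matrix Complex

noncomputable section

/-- The symplectic matrix `J` as a real matrix. -/
def Jr : Matrix (Fin 2) (Fin 2) ℝ := !![0, -1; 1, 0]

/-- The symplectic matrix `J` as a complex matrix. -/
def Jc : Matrix (Fin 2) (Fin 2) ℂ := !![0, -1; 1, 0]

lemma symplectic_fact (A : Matrix (Fin 2) (Fin 2) ℝ) :
    Aᵀ * Jr * A = A.det • Jr := by
  ext i j
  fin_cases i <;> fin_cases j <;>
    simp [Jr, Matrix.mul_apply, Matrix.det_fin_two, Fin.sum_univ_two, Matrix.transpose_apply] <;>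
    ring

lemma map_Jr : Jr.map Complex.ofReal = Jc := by
  ext i j; fin_cases i <;> fin_cases j <;> simp [Jr, Jc]

lemma map_mulR (A B : Matrix (Fin 2) (Fin 2) ℝ) :
    (A * B).map Complex.ofReal = A.map Complex.ofReal * B.map Complex.ofReal := by
  ext i j; simp [Matrix.mul_apply, Fin.sum_univ_two]

lemma map_smulR (r : ℝ) (A : Matrix (Fin 2) (Fin 2) ℝ) :
    (r • A).map Complex.ofReal = (r : ℂ) • A.map Complex.ofReal := by
  ext i j; simp

lemma map_addR (A B : Matrix (Fin 2) (Fin 2) ℝ) :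
    (A + B).map Complex.ofReal = A.map Complex.ofReal + B.map Complex.ofReal := by
  ext i j; simp

theorem liouville_transform_maps_solutions
    (a b ta tb : ℝ) (hab : a < b) (htab : ta < tb)
    (η η' : ℝ → ℝ) (Γ Γ' : ℝ → Matrix (Fin 2) (Fin 2) ℝ)
    (hηd : ∀ x ∈ Ioo a b, HasDerivAt η (η' x) x)
    (hηmono : StrictMonoOn η (Ioo a b))
    (hηbij : BijOn η (Ioo a b) (Ioo ta tb))
    (hΓd : ∀ x ∈ Ioo a b, ∀ i j, HasDerivAt (fun t => Γ t i j) (Γ' x i j) x)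
    (hdet : ∀ x ∈ Ioo a b, (Γ x).det = 1)
    (R Q : ℝ → Matrix (Fin 2) (Fin 2) ℝ) (tR tQ : ℝ → Matrix (Fin 2) (Fin 2) ℝ)
    (hR : ∀ x ∈ Ioo a b, η' x • tR (η x) = (Γ x)ᵀ * R x * Γ x)
    (hQ : ∀ x ∈ Ioo a b, η' x • tQ (η x) = (Γ x)ᵀ * Q x * Γ x + (Γ x)ᵀ * Jr * Γ' x)
    (tf tf' tg : ℝ → Fin 2 → ℂ)
    (htfd : ∀ y ∈ Ioo ta tb, ∀ i, HasDerivAt (fun t => tf t i) (tf' y i) y)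
    (htsol : ∀ y ∈ Ioo ta tb,
      Jc *ᵥ tf' y + (tQ y).map Complex.ofReal *ᵥ tf y = (tR y).map Complex.ofReal *ᵥ tg y)
    (f g f' : ℝ → Fin 2 → ℂ)
    (hf : ∀ x ∈ Ioo a b, f x = (Γ x).map Complex.ofReal *ᵥ tf (η x))
    (hg : ∀ x ∈ Ioo a b, g x = (Γ x).map Complex.ofReal *ᵥ tg (η x))
    (hfd : ∀ x ∈ Ioo a b, ∀ i, HasDerivAt (fun t => f t i) (f' x i) x) :
    ∀ x ∈ Ioo a b,
      Jc *ᵥ f' x + (Q x).map Complex.ofReal *ᵥ f x = (R x).map Complex.ofReal *ᵥ g x := by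
  intro x hx
  have hy : η x ∈ Ioo ta tb := hηbij.mapsTo hx
  set y := η x
  -- derivative of f
  have hF : ∀ i, HasDerivAt (fun t => ((Γ t).map Complex.ofReal *ᵥ tf (η t)) i)
      (((Γ' x).map Complex.ofReal *ᵥ tf y + (η' x : ℂ) • ((Γ x).map Complex.ofReal *ᵥ tf' y)) i)
      x := by
    intro i
    have : ∀ j : Fin 2, HasDerivAt (fun t => ((Γ t i j : ℂ) * tf (η t) j))
        ((Γ' x i j : ℂ) * tf y j + (Γ x i j : ℂ) * ((η' x : ℂ) * tf' y j)) x := by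
      intro j
      have h1 : HasDerivAt (fun t => (Γ t i j : ℂ)) ((Γ' x i j : ℂ)) x :=
        (hΓd x hx i j).ofReal_comp
      have h2 : HasDerivAt (fun t => tf (η t) j) (η' x • tf' y j) x :=
        (htfd y hy j).scomp x (hηd x hx)
      have := h1.mul h2
      exact this.congr_deriv
        (by first | (rw [Complex.real_smul]; ring) | rw [Complex.real_smul])
    have := ((this 0).add (this 1))
    simpa [Matrix.mulVec, dotProduct, Fin.sum_univ_two, smul_eq_mul,
      Pi.add_apply, Pi.smul_apply, Pi.add_def] using this.congr_deriv (by push_cast; fin_cases i <;> simp <;> ring)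
  have hf'eq : f' x = (Γ' x).map Complex.ofReal *ᵥ tf y
      + (η' x : ℂ) • ((Γ x).map Complex.ofReal *ᵥ tf' y) := by
    funext i
    have hev : (fun t => f t i) =ᶠ[nhds x] (fun t => ((Γ t).map Complex.ofReal *ᵥ tf (η t)) i) := by
      filter_upwards [Ioo_mem_nhds hx.1 hx.2] with t ht
      rw [hf t ht]
    exact ((hfd x hx i)).unique ((hF i).congr_of_eventuallyEq hev)
  -- notations
  set Γc := (Γ x).map Complex.ofReal with hΓc
  set Γc' := (Γ' x).map Complex.ofReal with hΓc'
  have hsymp : Γcᵀ * Jc * Γc = Jc := by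
    have := symplectic_fact (Γ x)
    rw [hdet x hx, one_smul] at this
    have := congrArg (Matrix.map · Complex.ofReal) this
    simpa [map_mulR, map_Jr, hΓc, Matrix.transpose_map] using this
  have hRc : (η' x : ℂ) • (tR y).map Complex.ofReal = Γcᵀ * (R x).map Complex.ofReal * Γc := by
    have := congrArg (Matrix.map · Complex.ofReal) (hR x hx)
    simpa [map_mulR, map_smulR, hΓc, Matrix.transpose_map] using this
  have hQc : (η' x : ℂ) • (tQ y).map Complex.ofReal
      = Γcᵀ * (Q x).map Complex.ofReal * Γc + Γcᵀ * Jc * Γc' := by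
    have := congrArg (Matrix.map · Complex.ofReal) (hQ x hx)
    simpa [map_mulR, map_addR, map_smulR, map_Jr, hΓc, hΓc', Matrix.transpose_map] using this
  -- injectivity of Γcᵀ *ᵥ
  have hdetc : IsUnit Γcᵀ.det := by
    have h1 : (Γ x).det = 1 := hdet x hx
    rw [Matrix.det_fin_two] at h1
    have hdc : Γcᵀ.det = 1 := by
      rw [Matrix.det_transpose, hΓc, Matrix.det_fin_two]
      simp only [Matrix.map_apply]
      exact_mod_cast h1
    rw [hdc]; simp
  have hinj : Function.Injective (Γcᵀ.mulVec) :=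
    Matrix.mulVec_injective_iff_isUnit.mpr ((Matrix.isUnit_iff_isUnit_det _).mpr hdetc)
  apply hinj
  -- compute both sides
  have hsol := htsol y hy
  rw [hf x hx, hg x hx, hf'eq]
  simp only [Matrix.mulVec_add, Matrix.mulVec_smul, Matrix.mulVec_mulVec, ← mul_assoc]
  rw [hsymp, ← hRc, Matrix.smul_mulVec, ← hsol, smul_add]
  have hsum : (Γcᵀ * Jc * Γc') *ᵥ tf y + (Γcᵀ * (Q x).map Complex.ofReal * Γc) *ᵥ tf y
      = (η' x : ℂ) • ((tQ y).map Complex.ofReal *ᵥ tf y) := by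
    rw [← Matrix.add_mulVec, add_comm (Γcᵀ * Jc * Γc'), ← hQc, Matrix.smul_mulVec]
  rw [← hsum]
  abel
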